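/- Let X be a CAT(0) space and K ⊆ X a subset that is compact for the metric topology 𝒯. Then the subspace topologies induced on K by 𝒯 and by 𝒯_c coincide, where 𝒯_c is the weakest topology on X in which every metrically closed convex subset of X is closed. -/
import Mathlib


/-- A map `σ : ℝ → X` is a geodesic (isometric) on the interval `[a, b]`. -/
def IsGeodesicOn {X : Type*} [MetricSpace X] (σ : ℝ → X) (a b : ℝ) : Prop :=
  ∀ s ∈ Set.Icc a b, ∀ t ∈ Set.Icc a b, dist (σ s) (σ t) = |s - t|

/-- A geodesic metric space: any two points are joined by a geodesic segment. -/
def IsGeodesicSpace (X : Type*) [MetricSpace X] : Prop :=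
  ∀ x y : X, ∃ σ : ℝ → X, IsGeodesicOn σ 0 (dist x y) ∧ σ 0 = x ∧ σ (dist x y) = y

/-- A CAT(0) space: a geodesic space satisfying the CN inequality of Bruhat–Tits
for all (metric) midpoints. -/
def IsCAT0 (X : Type*) [MetricSpace X] : Prop :=
  IsGeodesicSpace X ∧
    ∀ x c c' m : X, dist m c = dist c c' / 2 → dist m c' = dist c c' / 2 →
      2 * dist m x ^ 2 ≤ dist c' x ^ 2 + dist c x ^ 2 - dist c' c ^ 2 / 2

/-- A subset of a metric space is (geodesically) convex if it contains every geodesic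
segment joining any two of its points. -/
def GConvex {X : Type*} [MetricSpace X] (A : Set X) : Prop :=
  ∀ (σ : ℝ → X) (a b : ℝ), a ≤ b → IsGeodesicOn σ a b → σ a ∈ A → σ b ∈ A →
    ∀ t ∈ Set.Icc a b, σ t ∈ A

/-- `ρ` is an action of the group `G` on `X` by isometries. -/
def IsIsometricAction {G X : Type*} [Group G] [MetricSpace X] (ρ : G → X → X) : Prop :=
  (∀ x, ρ 1 x = x) ∧ (∀ g h x, ρ (g * h) x = ρ g (ρ h x)) ∧ ∀ g : G, Isometry (ρ g)

/-- A subset `T ⊆ X` is `Q`-evanescent: the set of displacements `d(g x, x)`,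
`g ∈ Q`, `x ∈ T`, is bounded. -/
def QEvanescent {G X : Type*} [MetricSpace X] (ρ : G → X → X) (Q : Set G) (T : Set X) : Prop :=
  ∃ C : ℝ, ∀ g ∈ Q, ∀ x ∈ T, dist (ρ g x) x ≤ C

/-- The action is evanescent: there is an unbounded set which is `Q`-evanescent
for every compact `Q ⊆ G`. -/
def Evanescent {G X : Type*} [TopologicalSpace G] [MetricSpace X] (ρ : G → X → X) : Prop :=
  ∃ T : Set X, ¬ Bornology.IsBounded T ∧ ∀ Q : Set G, IsCompact Q → QEvanescent ρ Q T

/-- The action is weakly evanescent: for every compact `Q ⊆ G` there is an unbounded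
`Q`-evanescent set. -/
def WeaklyEvanescent {G X : Type*} [TopologicalSpace G] [MetricSpace X] (ρ : G → X → X) : Prop :=
  ∀ Q : Set G, IsCompact Q → ∃ T : Set X, ¬ Bornology.IsBounded T ∧ QEvanescent ρ Q T

/-- The topology `𝒯_c`: the weakest topology on `X` in which every metrically closed
convex subset is closed (generated by the complements of such sets). -/
def Tc (X : Type*) [MetricSpace X] : TopologicalSpace X :=
  TopologicalSpace.generateFrom {U : Set X | ∃ C : Set X, IsClosed C ∧ GConvex C ∧ U = Cᶜ}

open Topology

lemma gconvex_closedBall {X : Type*} [MetricSpace X] (hX : IsCAT0 X) (x : X) (r : ℝ) :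
    GConvex (Metric.closedBall x r) := by
  intro σ a b hab hgeo ha hb t ht
  have hr : 0 ≤ r := le_trans dist_nonneg (Metric.mem_closedBall.mp ha)
  set S : Set ℝ := {s | s ∈ Set.Icc a b ∧ dist (σ s) x ≤ r} with hSdef
  -- S is closed
  have hSsub : S ⊆ Set.Icc a b := fun s hs => hs.1
  have hSclosed : IsClosed S := by
    apply isClosed_of_closure_subset
    intro s hs
    have hsI : s ∈ Set.Icc a b :=
      isClosed_Icc.closure_subset ((closure_mono hSsub) hs)
    refine ⟨hsI, le_of_forall_pos_le_add fun ε hε => le_of_lt ?_⟩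
    obtain ⟨s', hs'S, hss'⟩ := Metric.mem_closure_iff.mp hs ε hε
    have hd := hgeo s hsI s' hs'S.1
    calc dist (σ s) x ≤ dist (σ s) (σ s') + dist (σ s') x := dist_triangle _ _ _
      _ ≤ |s - s'| + r := by rw [hd]; linarith [hs'S.2]
      _ < ε + r := by rw [Real.dist_eq] at hss'; linarith
      _ = r + ε := by ring
  -- S is closed under midpoints
  have hmid : ∀ s ∈ S, ∀ s' ∈ S, (s + s') / 2 ∈ S := by
    intro s hs s' hs'
    have hmI : (s + s') / 2 ∈ Set.Icc a b := by
      constructor <;> [skip; skip] <;>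
        simp only [Set.mem_Icc] at * <;>
        [linarith [hs.1.1, hs'.1.1]; linarith [hs.1.2, hs'.1.2]]
    refine ⟨hmI, ?_⟩
    have hcc' : dist (σ s) (σ s') = |s - s'| := hgeo s hs.1 s' hs'.1
    have h1 : dist (σ ((s + s') / 2)) (σ s) = dist (σ s) (σ s') / 2 := by
      rw [hgeo _ hmI s hs.1, hcc']
      rw [show (s + s') / 2 - s = (s' - s) / 2 by ring, abs_div, abs_sub_comm s s']
      norm_num
    have h2 : dist (σ ((s + s') / 2)) (σ s') = dist (σ s) (σ s') / 2 := by
      rw [hgeo _ hmI s' hs'.1, hcc']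
      rw [show (s + s') / 2 - s' = (s - s') / 2 by ring, abs_div]
      norm_num
    have hCN := hX.2 x (σ s) (σ s') (σ ((s + s') / 2)) h1 h2
    have hdnn : (0:ℝ) ≤ dist (σ ((s + s') / 2)) x := dist_nonneg
    have hdd : (0:ℝ) ≤ dist (σ s') (σ s) := dist_nonneg
    nlinarith [hs.2, hs'.2, dist_nonneg (x := σ s) (y := x), dist_nonneg (x := σ s') (y := x)]
  -- bisection: t ∈ S
  set A : Set ℝ := S ∩ Set.Iic t with hAdef
  set B : Set ℝ := S ∩ Set.Ici t with hBdef
  have haS : a ∈ S := ⟨Set.left_mem_Icc.mpr hab, ha⟩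
  have hbS : b ∈ S := ⟨Set.right_mem_Icc.mpr hab, hb⟩
  have hAne : A.Nonempty := ⟨a, haS, ht.1⟩
  have hBne : B.Nonempty := ⟨b, hbS, ht.2⟩
  have hAbdd : BddAbove A := ⟨t, fun s hs => hs.2⟩
  have hBbdd : BddBelow B := ⟨t, fun s hs => hs.2⟩
  have hAclosed : IsClosed A := hSclosed.inter isClosed_Iic
  have hBclosed : IsClosed B := hSclosed.inter isClosed_Ici
  set u := sSup A with hu
  set v := sInf B with hv
  have huA : u ∈ A := hAclosed.csSup_mem hAne hAbdd
  have hvB : v ∈ B := hBclosed.csInf_mem hBne hBbdd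
  have hut : u ≤ t := huA.2
  have htv : t ≤ v := hvB.2
  have hmS : (u + v) / 2 ∈ S := hmid u huA.1 v hvB.1
  rcases le_total ((u + v) / 2) t with hle | hge
  · have : (u + v) / 2 ∈ A := ⟨hmS, hle⟩
    have h2 : (u + v) / 2 ≤ u := le_csSup hAbdd this
    have : t = u := le_antisymm (by linarith) hut
    have : σ t ∈ Metric.closedBall x r := by
      rw [this]; exact huA.1.2
    exact this
  · have : (u + v) / 2 ∈ B := ⟨hmS, hge⟩
    have h2 : v ≤ (u + v) / 2 := csInf_le hBbdd this
    have : t = v := le_antisymm htv (by linarith)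
    rw [this]; exact hvB.1.2

lemma tc_isClosed_closedBall {X : Type*} [MetricSpace X] (hX : IsCAT0 X) (x : X) (r : ℝ) :
    IsClosed[Tc X] (Metric.closedBall x r) := by
  exact (@isOpen_compl_iff X _ (Tc X)).mp (TopologicalSpace.GenerateOpen.basic _
    ⟨Metric.closedBall x r, Metric.isClosed_closedBall, gconvex_closedBall hX x r, rfl⟩)

lemma tc_isClosed_of_isCompact {X : Type*} [MetricSpace X] (hX : IsCAT0 X)
    {F : Set X} (hF : IsCompact F) : IsClosed[Tc X] F := by
  rcases F.eq_empty_or_nonempty with rfl | hFne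
  · exact @isClosed_empty X (Tc X)
  have key : ∀ p : X, p ∉ F → ∃ D : Set X, IsClosed[Tc X] D ∧ F ⊆ D ∧ p ∉ D := by
    intro p hp
    have hFc : IsClosed F := hF.isClosed
    have hpos : 0 < Metric.infDist p F := by
      rwa [← hFc.notMem_iff_infDist_pos hFne]
    set ε := Metric.infDist p F / 2 with hε
    have hεpos : 0 < ε := by positivity
    obtain ⟨s, hsF, hsfin, hcover⟩ :=
      hF.elim_finite_subcover_image (fun q (_ : q ∈ F) => Metric.isOpen_ball (x := q) (ε := ε))
        (fun z hz => Set.mem_biUnion hz (Metric.mem_ball_self hεpos))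
    refine ⟨⋃ q ∈ s, Metric.closedBall q ε, ?_, ?_, ?_⟩
    · exact @Set.Finite.isClosed_biUnion X X (Tc X) s _ hsfin
        (fun q _ => tc_isClosed_closedBall hX q ε)
    · exact hcover.trans (Set.iUnion₂_mono fun q _ => Metric.ball_subset_closedBall)
    · intro hpmem
      obtain ⟨q, hq, hpq⟩ := Set.mem_iUnion₂.mp hpmem
      have hqF : q ∈ F := hsF hq
      have : Metric.infDist p F ≤ dist p q := Metric.infDist_le_dist_of_mem hqF
      rw [Metric.mem_closedBall] at hpq
      linarith
  choose D hD1 hD2 hD3 using key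
  have hFeq : F = ⋂ (p : X) (hp : p ∉ F), D p hp := by
    ext z
    simp only [Set.mem_iInter]
    constructor
    · exact fun hz p hp => hD2 p hp hz
    · intro h
      by_contra hz
      exact hD3 z hz (h z hz)
  rw [hFeq]
  exact @isClosed_iInter X X (Tc X) _ fun p => @isClosed_iInter X _ (Tc X) _ fun hp => hD1 p hp

theorem Tc_eq_metric_on_compact
    {X : Type*} [MetricSpace X] (hX : IsCAT0 X) (K : Set X) (hK : IsCompact K) :
    TopologicalSpace.induced (Subtype.val : K → X) (Tc X) =
      TopologicalSpace.induced (Subtype.val : K → X) (inferInstance : TopologicalSpace X) := by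
  refine le_antisymm ?_ ?_
  · -- every metric-induced-open set is Tc-induced-open
    intro U hU
    haveI : CompactSpace K := isCompact_iff_compactSpace.mp hK
    have hUopen : IsOpen U := hU
    have hFclosed : IsClosed Uᶜ := hUopen.isClosed_compl
    have hFcpt : IsCompact Uᶜ := hFclosed.isCompact
    have hIm : IsCompact (Subtype.val '' Uᶜ : Set X) := hFcpt.image continuous_subtype_val
    have hTc : IsClosed[Tc X] (Subtype.val '' Uᶜ : Set X) := tc_isClosed_of_isCompact hX hIm
    refine (@isOpen_induced_iff _ _ (Tc X) _ _).mpr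
      ⟨(Subtype.val '' Uᶜ : Set X)ᶜ, (@isOpen_compl_iff X _ (Tc X)).mpr hTc, ?_⟩
    rw [Set.preimage_compl, Subtype.val_injective.preimage_image, compl_compl]
  · exact induced_mono (le_generateFrom (by
      rintro V ⟨C, hC, -, rfl⟩
      exact hC.isOpen_compl))
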